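/- arXiv:0812.2591 — 5 statements merged into one kernel-verified Lean document; each statement's English description precedes it below -/
import Mathlib

section
/- Let F_q be a finite field with q odd, and let α be a nonzero element of F_q. Define G_α as the set {[a] : a ∈ F_q, a ≠ ±α} together with an extra element [∞], with operation: [a]*[∞] = [∞]*[a] = [a], [a₁]*[−a₁] = [∞], and [a₁]*[a₂] = [(a₁a₂ + α²)/(a₁ + a₂)] when a₁ + a₂ ≠ 0. Then (G_α, *) is an abelian group with identity [∞]. -/
/-- The carrier of the group `G_α`: elements `[a]` with `a ≠ ±α`, plus `[∞]` (encoded `none`). -/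
def GCarrier (F : Type*) [Field F] (α : F) : Type _ := Option {a : F // a ≠ α ∧ a ≠ -α}

/-- The group operation `*` on `G_α`, with `[∞]` as identity. -/
noncomputable def GOp {F : Type*} [Field F] (α : F) :
    GCarrier F α → GCarrier F α → GCarrier F α
  | none, x => x
  | some a, none => some a
  | some a₁, some a₂ =>
    open Classical in
    if h : a₁.1 + a₂.1 = 0 then none
    else some ⟨(a₁.1 * a₂.1 + α ^ 2) / (a₁.1 + a₂.1), by
      constructor
      · intro hc
        rw [div_eq_iff h] at hc
        have h2 : (a₁.1 - α) * (a₂.1 - α) = 0 := by ring_nf; linear_combination hc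
        rcases mul_eq_zero.mp h2 with h3 | h3
        · exact a₁.2.1 (sub_eq_zero.mp h3)
        · exact a₂.2.1 (sub_eq_zero.mp h3)
      · intro hc
        rw [div_eq_iff h] at hc
        have h2 : (a₁.1 + α) * (a₂.1 + α) = 0 := by ring_nf; linear_combination hc
        rcases mul_eq_zero.mp h2 with h3 | h3
        · exact a₁.2.2 (eq_neg_of_add_eq_zero_left h3)
        · exact a₂.2.2 (eq_neg_of_add_eq_zero_left h3)⟩

/-- Powers in `G_α`. -/
noncomputable def GPow {F : Type*} [Field F] (α : F) (x : GCarrier F α) : ℕ → GCarrier F α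
  | 0 => none
  | n + 1 => GOp α x (GPow α x n)

lemma mk_eq_mk {F : Type*} [Field F] {α : F} (x y : F) (hx hy)
    (h : x = y) : (some ⟨x, hx⟩ : GCarrier F α) = some ⟨y, hy⟩ :=
  congrArg some (Subtype.ext h)

lemma mk_eq_val {F : Type*} [Field F] {α : F} (x : F) (hx) (v : {a : F // a ≠ α ∧ a ≠ -α})
    (h : x = v.1) : (some ⟨x, hx⟩ : GCarrier F α) = some v :=
  congrArg some (Subtype.ext h)

lemma val_eq_mk {F : Type*} [Field F] {α : F} (x : F) (hx) (v : {a : F // a ≠ α ∧ a ≠ -α})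
    (h : v.1 = x) : (some v : GCarrier F α) = some ⟨x, hx⟩ :=
  congrArg some (Subtype.ext h)

/-- For a finite field `F` of odd cardinality and `α ≠ 0`,
`(G_α, *)` is an abelian group with identity `[∞]`. -/
theorem G_alpha_is_abelian_group {F : Type*} [Field F] [Fintype F]
    (hq : Odd (Fintype.card F)) (α : F) (hα : α ≠ 0) :
    (∀ x : GCarrier F α, GOp α none x = x ∧ GOp α x none = x) ∧
    (∀ x y : GCarrier F α, GOp α x y = GOp α y x) ∧
    (∀ x y z : GCarrier F α, GOp α (GOp α x y) z = GOp α x (GOp α y z)) ∧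
    (∀ x : GCarrier F α, ∃ y : GCarrier F α, GOp α x y = none) := by
  have key : ∀ (a : {a : F // a ≠ α ∧ a ≠ -α}), α ^ 2 - a.1 ^ 2 ≠ 0 := by
    intro a h
    have h2 : (a.1 - α) * (a.1 + α) = 0 := by linear_combination -h
    rcases mul_eq_zero.mp h2 with h3 | h3
    · exact a.2.1 (sub_eq_zero.mp h3)
    · exact a.2.2 (eq_neg_of_add_eq_zero_left h3)
  refine ⟨fun x => ⟨rfl, by cases x <;> rfl⟩, ?_, ?_, ?_⟩
  · rintro (_ | a) (_ | b)
    · rfl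
    · rfl
    · rfl
    · simp only [GOp, GCarrier]
      split_ifs with h1 h2 h2
      · rfl
      · exact absurd (by linear_combination h1) h2
      · exact absurd (by linear_combination h2) h1
      · exact mk_eq_mk _ _ _ _ (by rw [add_comm b.1 a.1, mul_comm b.1 a.1])
  · rintro (_ | a) (_ | b) (_ | c)
    · rfl
    · rfl
    · rfl
    · rfl
    · rfl
    · rfl
    · show GOp α (GOp α (some a) (some b)) none = GOp α (some a) (some b)
      cases GOp α (some a) (some b) <;> rfl
    · by_cases hab : a.1 + b.1 = 0
      · by_cases hbc : b.1 + c.1 = 0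
        · simp only [GOp, GCarrier, dif_pos hab, dif_pos hbc]
          exact congrArg some (Subtype.ext (by linear_combination hbc - hab))
        · have hae : a.1 + (b.1 * c.1 + α ^ 2) / (b.1 + c.1) ≠ 0 := by
            intro h
            apply key b
            field_simp at h
            linear_combination h - (b.1 + c.1) * hab
          simp only [GOp, GCarrier, dif_pos hab, dif_neg hbc, dif_neg hae]
          refine val_eq_mk _ _ _ ?_
          rw [eq_div_iff hae]
          field_simp
          linear_combination (c.1 ^ 2 - α ^ 2) * hab
      · by_cases hbc : b.1 + c.1 = 0
        · have hdc : (a.1 * b.1 + α ^ 2) / (a.1 + b.1) + c.1 ≠ 0 := by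
            intro h
            apply key b
            field_simp at h
            linear_combination h - (a.1 + b.1) * hbc
          simp only [GOp, GCarrier, dif_neg hab, dif_pos hbc, dif_neg hdc]
          refine mk_eq_val _ _ _ ?_
          rw [div_eq_iff hdc]
          field_simp
          linear_combination (α ^ 2 - a.1 ^ 2) * hbc
        · by_cases hN : a.1 * b.1 + a.1 * c.1 + b.1 * c.1 + α ^ 2 = 0
          · have hdc : (a.1 * b.1 + α ^ 2) / (a.1 + b.1) + c.1 = 0 := by
              field_simp
              linear_combination hN
            have hae : a.1 + (b.1 * c.1 + α ^ 2) / (b.1 + c.1) = 0 := by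
              field_simp
              linear_combination hN
            simp only [GOp, GCarrier, dif_neg hab, dif_neg hbc, dif_pos hdc, dif_pos hae]
          · have hdc : (a.1 * b.1 + α ^ 2) / (a.1 + b.1) + c.1 ≠ 0 := by
              intro h
              apply hN
              field_simp at h
              linear_combination h
            have hae : a.1 + (b.1 * c.1 + α ^ 2) / (b.1 + c.1) ≠ 0 := by
              intro h
              apply hN
              field_simp at h
              linear_combination h
            simp only [GOp, GCarrier, dif_neg hab, dif_neg hbc, dif_neg hdc, dif_neg hae]
            refine mk_eq_mk _ _ _ _ ?_
            rw [div_eq_div_iff hdc hae]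
            field_simp
            ring
  · rintro (_ | a)
    · exact ⟨none, rfl⟩
    · refine ⟨some ⟨-a.1, fun h => a.2.2 (neg_eq_iff_eq_neg.mp h),
        fun h => a.2.1 (neg_injective h)⟩, ?_⟩
      simp only [GOp, GCarrier, dif_pos (add_neg_cancel a.1)]
end

section
/- With G_α as above, the map ψ : G_α → F_q^× given by ψ([∞]) = 1 and ψ([a]) = (a + α)/(a − α) is a group isomorphism from (G_α, *) onto the multiplicative group F_q^×. -/
/-- The map `ψ : G_α → F`, `[∞] ↦ 1`, `[a] ↦ (a+α)/(a−α)`. -/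
noncomputable def GPsi {F : Type*} [Field F] (α : F) : GCarrier F α → F
  | none => 1
  | some a => (a.1 + α) / (a.1 - α)

lemma two_ne_zero_of_odd_card {F : Type*} [Field F] [Fintype F]
    (hq : Odd (Fintype.card F)) : (2 : F) ≠ 0 := by
  intro h2
  have hchar : ringChar F ∣ 2 := (ringChar.spec F 2).mp (by exact_mod_cast h2)
  rcases (Nat.dvd_prime Nat.prime_two).mp hchar with h | h
  · exact CharP.ringChar_ne_one h
  · have := FiniteField.even_card_iff_char_two.mp h
    rcases hq with ⟨k, hk⟩
    omega

/-- `ψ` is a group isomorphism from `(G_α, *)` onto the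
multiplicative group `F_q^× = F \ {0}`. -/
theorem psi_isomorphism {F : Type*} [Field F] [Fintype F]
    (hq : Odd (Fintype.card F)) (α : F) (hα : α ≠ 0) :
    Function.Injective (GPsi α) ∧
    Set.range (GPsi α) = {b : F | b ≠ 0} ∧
    (∀ x y : GCarrier F α, GPsi α (GOp α x y) = GPsi α x * GPsi α y) := by
  have h2 : (2 : F) ≠ 0 := two_ne_zero_of_odd_card hq
  refine ⟨?_, ?_, ?_⟩
  · intro x y h
    match x, y with
    | none, none => rfl
    | none, some b =>
        exfalso
        have hb : b.1 - α ≠ 0 := sub_ne_zero.mpr b.2.1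
        have h' : (1 : F) = (b.1 + α) / (b.1 - α) := h
        rw [eq_div_iff hb] at h'
        exact (mul_ne_zero h2 hα) (by linear_combination -h')
    | some b, none =>
        exfalso
        have hb : b.1 - α ≠ 0 := sub_ne_zero.mpr b.2.1
        have h' : (b.1 + α) / (b.1 - α) = (1 : F) := h
        rw [div_eq_iff hb] at h'
        exact (mul_ne_zero h2 hα) (by linear_combination h')
    | some a, some b =>
        have ha : a.1 - α ≠ 0 := sub_ne_zero.mpr a.2.1
        have hb : b.1 - α ≠ 0 := sub_ne_zero.mpr b.2.1
        have h' : (a.1 + α) / (a.1 - α) = (b.1 + α) / (b.1 - α) := h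
        rw [div_eq_div_iff ha hb] at h'
        have hab : (2 : F) * α * (b.1 - a.1) = 0 := by linear_combination h'
        have hba : b.1 - a.1 = 0 := by
          rcases mul_eq_zero.mp hab with h3 | h3
          · exact absurd h3 (mul_ne_zero h2 hα)
          · exact h3
        exact congrArg some (Subtype.ext (sub_eq_zero.mp hba).symm)
  · ext b
    simp only [Set.mem_range, Set.mem_setOf_eq]
    constructor
    · rintro ⟨x, rfl⟩
      match x with
      | none => exact one_ne_zero
      | some a =>
          have hnum : a.1 + α ≠ 0 := fun h => a.2.2 (eq_neg_of_add_eq_zero_left h)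
          have hden : a.1 - α ≠ 0 := sub_ne_zero.mpr a.2.1
          exact div_ne_zero hnum hden
    · intro hb
      by_cases hb1 : b = 1
      · exact ⟨none, hb1.symm⟩
      · have hbm : b - 1 ≠ 0 := sub_ne_zero.mpr hb1
        refine ⟨some ⟨α * (b + 1) / (b - 1), ?_, ?_⟩, ?_⟩
        · intro hc
          rw [div_eq_iff hbm] at hc
          exact (mul_ne_zero hα h2) (by linear_combination hc)
        · intro hc
          rw [div_eq_iff hbm] at hc
          have h3 : (α * 2) * b = 0 := by linear_combination hc
          rcases mul_eq_zero.mp h3 with h4 | h4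
          · exact (mul_ne_zero hα h2) h4
          · exact hb h4
        · show (α * (b + 1) / (b - 1) + α) / (α * (b + 1) / (b - 1) - α) = b
          have hden2 : α * (b + 1) / (b - 1) - α ≠ 0 := by
            rw [div_sub' hbm]
            refine div_ne_zero ?_ hbm
            intro hc
            exact (mul_ne_zero hα h2) (by linear_combination hc)
          rw [div_eq_iff hden2]
          field_simp
          ring
  · intro x y
    match x, y with
    | none, y => simp [GOp, GPsi]
    | some a, none => simp [GOp, GPsi]
    | some a, some b =>
        have ha1 : a.1 - α ≠ 0 := sub_ne_zero.mpr a.2.1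
        have hb1 : b.1 - α ≠ 0 := sub_ne_zero.mpr b.2.1
        by_cases h : a.1 + b.1 = 0
        · show GPsi α (GOp α (some a) (some b)) = _
          rw [GOp]
          erw [dif_pos h]
          show (1 : F) = (a.1 + α) / (a.1 - α) * ((b.1 + α) / (b.1 - α))
          rw [div_mul_div_comm, eq_div_iff (mul_ne_zero ha1 hb1)]
          have hb : b.1 = -a.1 := eq_neg_of_add_eq_zero_right h
          rw [hb]; ring
        · show GPsi α (GOp α (some a) (some b)) = _
          rw [GOp]
          erw [dif_neg h]
          show ((a.1 * b.1 + α ^ 2) / (a.1 + b.1) + α) / ((a.1 * b.1 + α ^ 2) / (a.1 + b.1) - α)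
              = (a.1 + α) / (a.1 - α) * ((b.1 + α) / (b.1 - α))
          have hden : (a.1 * b.1 + α ^ 2) / (a.1 + b.1) - α ≠ 0 := by
            rw [div_sub' h]
            refine div_ne_zero ?_ h
            intro hc
            exact (mul_ne_zero ha1 hb1) (by linear_combination hc)
          rw [div_mul_div_comm, div_eq_div_iff hden (mul_ne_zero ha1 hb1)]
          field_simp
          ring
end

section
/- Let [a] ∈ G_α with [a]² ≠ [∞] and suppose [a]^d = [∞] for some d > 0. Let ζ_d ∈ F_q be a primitive d-th root of unity. Then α = ± a(ζ_d^k − 1)/(ζ_d^k + 1) for some integer k with 0 < k < d/2. -/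
/-- The map `ψ : G_α → F`, `[c] ↦ (c+α)/(c−α)`, `[∞] ↦ 1`. -/
def Gpsi {F : Type*} [Field F] (α : F) : GCarrier F α → F
  | none => 1
  | some c => (c.1 + α) / (c.1 - α)

lemma Gpsi_op {F : Type*} [Field F] (α : F) (x y : GCarrier F α) :
    Gpsi α (GOp α x y) = Gpsi α x * Gpsi α y := by
  match x, y with
  | none, y => simp [GOp, Gpsi]
  | some a₁, none => simp [GOp, Gpsi]
  | some a₁, some a₂ =>
    have h₁ : a₁.1 - α ≠ 0 := sub_ne_zero.mpr a₁.2.1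
    have h₂ : a₂.1 - α ≠ 0 := sub_ne_zero.mpr a₂.2.1
    rw [GOp]
    split_ifs with h
    · erw [dif_pos h]
      show (1:F) = _
      simp only [Gpsi]
      have ha2 : (a₂.1 : F) = -a₁.1 := eq_neg_of_add_eq_zero_right h
      rw [ha2] at h₂ ⊢
      field_simp
      ring
    · erw [dif_neg h]
      simp only [Gpsi]
      have hden : a₁.1 * a₂.1 + α^2 - α*(a₁.1 + a₂.1) ≠ 0 := by
        intro hz; exact mul_ne_zero h₁ h₂ (by linear_combination hz)
      have lhs : ((a₁.1 * a₂.1 + α^2)/(a₁.1 + a₂.1) + α)/((a₁.1 * a₂.1 + α^2)/(a₁.1 + a₂.1) - α)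
          = (a₁.1 * a₂.1 + α^2 + α*(a₁.1 + a₂.1))/(a₁.1 * a₂.1 + α^2 - α*(a₁.1 + a₂.1)) := by
        rw [div_add' _ _ _ h, div_sub' h, mul_comm (a₁.1 + a₂.1) α,
          div_div_div_cancel_right₀ h]
      rw [lhs, div_mul_div_comm, div_eq_div_iff hden (mul_ne_zero h₁ h₂)]
      ring

lemma Gpsi_pow {F : Type*} [Field F] (α : F) (x : GCarrier F α) (n : ℕ) :
    Gpsi α (GPow α x n) = (Gpsi α x) ^ n := by
  induction n with
  | zero => simp [GPow, Gpsi]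
  | succ n ih => rw [GPow, Gpsi_op, ih, pow_succ, mul_comm]

/-- Proposition: `α = ± a(ζ_d^k − 1)/(ζ_d^k + 1)`.
If `[a] ∈ G_α` with `[a]² ≠ [∞]` and `[a]^d = [∞]` for some `d > 0`, and `ζ`
is a primitive `d`-th root of unity in `F`, then
`α = ± a(ζ^k − 1)/(ζ^k + 1)` for some `0 < k < d/2`. -/
theorem sqrt_from_root_of_unity {F : Type*} [Field F] [Fintype F]
    (hq : Odd (Fintype.card F)) (α : F) (hα : α ≠ 0)
    (a : F) (ha : a ≠ α ∧ a ≠ -α) (d : ℕ) (hd : 0 < d)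
    (h2 : GPow α (some ⟨a, ha⟩) 2 ≠ none)
    (hdord : GPow α (some ⟨a, ha⟩) d = none)
    (ζ : F) (hζ : IsPrimitiveRoot ζ d) :
    ∃ k : ℕ, 0 < k ∧ 2 * k < d ∧
      (α = a * (ζ ^ k - 1) / (ζ ^ k + 1) ∨ α = -(a * (ζ ^ k - 1) / (ζ ^ k + 1))) := by
  haveI : NeZero d := ⟨hd.ne'⟩
  have h2F : (2 : F) ≠ 0 := by
    intro h20
    have hp : (ringChar F).Prime := CharP.char_is_prime F (ringChar F)
    have hdvd : ringChar F ∣ 2 := (CharP.cast_eq_zero_iff F (ringChar F) 2).mp h20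
    have hchar : ringChar F = 2 := (Nat.prime_dvd_prime_iff_eq hp Nat.prime_two).mp hdvd
    have := FiniteField.even_card_iff_char_two.mp hchar
    rw [Nat.odd_iff] at hq
    omega
  have hsub : a - α ≠ 0 := sub_ne_zero.mpr ha.1
  set b : F := (a + α) / (a - α) with hb
  have hb1 : b ≠ 1 := by
    intro h1
    rw [hb, div_eq_one_iff_eq hsub] at h1
    have h1' : (2:F) * α = 0 := by linear_combination h1
    exact hα ((mul_eq_zero.mp h1').resolve_left h2F)
  have ha0 : a ≠ 0 := by
    intro h0
    apply h2
    show GOp α _ (GOp α _ (GPow α _ 0)) = none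
    simp [GPow, GOp, h0]
    rfl
  have hbm1 : b ≠ -1 := by
    intro h1
    rw [hb, div_eq_iff hsub] at h1
    have h1' : (2:F) * a = 0 := by linear_combination h1
    exact ha0 ((mul_eq_zero.mp h1').resolve_left h2F)
  have hbd : b ^ d = 1 := by
    have h := Gpsi_pow α (some ⟨a, ha⟩) d
    rw [hdord] at h
    simp only [Gpsi] at h
    rw [← hb] at h
    exact h.symm
  have hb2 : b ^ 2 ≠ 1 := by
    intro h
    rw [sq, mul_self_eq_one_iff] at h
    rcases h with h | h
    · exact hb1 h
    · exact hbm1 h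
  obtain ⟨j, hjd, hje⟩ := hζ.eq_pow_of_pow_eq_one hbd
  have hj0 : j ≠ 0 := by
    rintro rfl
    simp only [pow_zero] at hje
    exact hb1 hje.symm
  have hj2 : 2 * j ≠ d := by
    intro hjj
    apply hb2
    rw [← hje, ← pow_mul, mul_comm j 2, hjj, hζ.pow_eq_one]
  rcases lt_or_gt_of_ne hj2 with hlt | hgt
  · refine ⟨j, Nat.pos_of_ne_zero hj0, hlt, Or.inl ?_⟩
    have hz1 : ζ ^ j + 1 ≠ 0 := by
      intro hz
      apply hbm1
      rw [← hje]
      linear_combination hz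
    have hba : a + α = ζ ^ j * (a - α) := by
      rw [hje, hb, div_mul_cancel₀ _ hsub]
    rw [eq_div_iff hz1]
    linear_combination hba
  · refine ⟨d - j, by omega, by omega, Or.inr ?_⟩
    have hk : ζ ^ (d - j) * ζ ^ j = 1 := by
      rw [← pow_add, Nat.sub_add_cancel (le_of_lt hjd), hζ.pow_eq_one]
    have hkb : ζ ^ (d - j) * b = 1 := by rw [← hje]; exact hk
    have hz1 : ζ ^ (d - j) + 1 ≠ 0 := by
      intro hz
      apply hbm1
      have hzm : ζ ^ (d - j) = -1 := by linear_combination hz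
      rw [hzm] at hkb
      linear_combination -hkb
    have hba : ζ ^ (d - j) * (a + α) = a - α := by
      have h := hkb
      rw [hb] at h
      field_simp at h
      linear_combination h
    rw [← neg_div, eq_div_iff hz1]
    linear_combination hba
end

section
/- Let p ≡ 1 (mod 4) be prime and suppose p ≡ 4 (mod 5). Let a = (−1 + √5)/2 ∈ F_p (where √5 denotes a square root of 5, which exists in F_p). Then a² − 4 is a quadratic nonresidue in F_p. -/
/-- Let `p ≡ 1 (mod 4)` be a prime with `p ≡ 4 (mod 5)`, and let
`s` be a square root of `5` in `F_p`. Setting `a = (−1 + s)/2`, the element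
`a² − 4` is a quadratic nonresidue in `F_p`. -/
theorem a_sq_sub_four_nonresidue (p : ℕ) [Fact p.Prime] (hp4 : p % 4 = 1)
    (hp5 : p % 5 = 4) (s : ZMod p) (hs : s ^ 2 = 5)
    (a : ZMod p) (ha : a = (-1 + s) / 2) :
    ¬ IsSquare (a ^ 2 - 4) := by
  have hpp : p.Prime := Fact.out
  have hpne2 : p ≠ 2 := by rintro rfl; omega
  have h2 : (2 : ZMod p) ≠ 0 := by
    intro h
    have hd : (p : ℕ) ∣ 2 := (ZMod.natCast_eq_zero_iff 2 p).mp (by exact_mod_cast h)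
    exact hpne2 ((Nat.prime_dvd_prime_iff_eq hpp Nat.prime_two).mp hd)
  -- a^2 = 1 - a
  have hsa : s = 2 * a + 1 := by
    rw [ha]; field_simp; ring
  have ha2 : a ^ 2 = 1 - a := by
    have h4 : (2 * a + 1) ^ 2 = 5 := by rw [← hsa]; exact hs
    have h4' : (4 : ZMod p) * (a ^ 2 + a - 1) = 0 := by linear_combination h4
    have h4ne : (4 : ZMod p) ≠ 0 := by
      intro h; apply h2
      have : ((2 : ZMod p)) * 2 = 0 := by linear_combination h
      rcases mul_eq_zero.mp this with h' | h' <;> exact h'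
    have := mul_eq_zero.mp h4'
    rcases this with h' | h'
    · exact absurd h' h4ne
    · linear_combination h'
  rintro ⟨t, ht⟩
  set z : ZMod p := (a + t) / 2 with hzdef
  have h4ne : (4 : ZMod p) ≠ 0 := by
    intro h; apply h2
    have h' : ((2 : ZMod p)) * 2 = 0 := by linear_combination h
    rcases mul_eq_zero.mp h' with h'' | h'' <;> exact h''
  have h2z : 2 * z = a + t := by
    rw [hzdef]; field_simp
  have hz2 : z ^ 2 = a * z - 1 := by
    have h4 : (4 : ZMod p) * (z ^ 2 - (a * z - 1)) = 0 := by
      linear_combination (2 * z + t - a) * h2z - ht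
    rcases mul_eq_zero.mp h4 with h' | h'
    · exact absurd h' h4ne
    · linear_combination h'
  have hz3 : z ^ 3 = -a * z - a := by
    linear_combination (z + a) * hz2 + z * ha2
  have hz5 : z ^ 5 = 1 := by
    linear_combination (z ^ 2 - a) * hz3 + (-a) * hz2 + ha2
  have h5ne : (5 : ZMod p) ≠ 0 := by
    intro h
    have : (p : ℕ) ∣ 5 := (ZMod.natCast_eq_zero_iff 5 p).mp (by exact_mod_cast h)
    have := (Nat.prime_dvd_prime_iff_eq hpp (by norm_num)).mp this
    omega
  have hz1 : z ≠ 1 := by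
    intro h
    rw [h] at hz2
    have haa : a = 2 := by linear_combination -hz2
    rw [haa] at ha2
    apply h5ne
    linear_combination ha2
  have hz0 : z ≠ 0 := by
    intro h
    rw [h] at hz5
    simp at hz5
  have hord : orderOf z = 5 := by
    have hdvd : orderOf z ∣ 5 := orderOf_dvd_of_pow_eq_one hz5
    rcases (Nat.Prime.eq_one_or_self_of_dvd (by norm_num) _ hdvd) with h | h
    · exact absurd (orderOf_eq_one_iff.mp h) hz1
    · exact h
  have hpow : z ^ (p - 1) = 1 := ZMod.pow_card_sub_one_eq_one hz0
  have h5dvd : (5 : ℕ) ∣ p - 1 := hord ▸ orderOf_dvd_of_pow_eq_one hpow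
  obtain ⟨k, hk⟩ := h5dvd
  have hp1 : 1 ≤ p := hpp.one_lt.le.trans' (by norm_num)
  omega
end

section
/- (Proth's Theorem) Let N = 2^e t + 1 with t odd and 2^e > t > 0, N > 3. If there exists an integer a with a^{(N−1)/2} ≡ −1 (mod N), then N is prime. -/
/-- Proth's Theorem. Let `N = 2^e t + 1` with `t` odd, `0 < t < 2^e`
and `N > 3`. If `a^{(N−1)/2} ≡ −1 (mod N)` for some `a`, then `N` is prime. -/
theorem proth_theorem (N e t : ℕ) (ht : Odd t) (ht0 : 0 < t) (hlt : t < 2 ^ e)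
    (hN : N = 2 ^ e * t + 1) (hN3 : 3 < N)
    (a : ZMod N) (ha : a ^ ((N - 1) / 2) = -1) :
    N.Prime := by
  by_contra hcomp
  set p := N.minFac with hpdef
  have hN1 : N ≠ 1 := by omega
  have hp : p.Prime := Nat.minFac_prime hN1
  have hpd : p ∣ N := Nat.minFac_dvd N
  have he : 1 ≤ e := by
    by_contra h
    push_neg at h
    interval_cases e <;> omega
  have h2e : 2 ^ e = 2 * 2 ^ (e - 1) := by
    conv_lhs => rw [show e = 1 + (e - 1) by omega]
    rw [pow_add, pow_one]
  have hNodd : ¬ (2 ∣ N) := by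
    rw [hN, h2e, mul_assoc]
    omega
  have hp2 : 2 < p := by
    rcases Nat.lt_or_ge p 3 with h | h
    · exfalso
      have h2 : p = 2 := by have := hp.two_le; omega
      exact hNodd (h2 ▸ hpd)
    · omega
  haveI : Fact p.Prime := ⟨hp⟩
  haveI : Fact (2 < p) := ⟨hp2⟩
  set b : ZMod p := ZMod.castHom hpd (ZMod p) a with hbdef
  have hb : b ^ ((N - 1) / 2) = -1 := by
    rw [hbdef, ← map_pow, ha, map_neg, map_one]
  have halfN : (N - 1) / 2 = 2 ^ (e - 1) * t := by
    rw [hN, Nat.add_sub_cancel, h2e, mul_assoc, Nat.mul_div_cancel_left _ two_pos]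
  set c : ZMod p := b ^ t with hcdef
  have hc1 : c ^ (2 ^ (e - 1)) = -1 := by
    rw [hcdef, ← pow_mul, mul_comm, ← halfN, hb]
  have hc2 : c ^ (2 ^ e) = 1 := by
    rw [show (2:ℕ) ^ e = 2 ^ (e - 1) * 2 by rw [h2e, mul_comm], pow_mul, hc1, neg_one_sq]
  have hord : orderOf c ∣ 2 ^ e := orderOf_dvd_of_pow_eq_one hc2
  obtain ⟨k, hk, hkeq⟩ := (Nat.dvd_prime_pow Nat.prime_two).mp hord
  have hke : k = e := by
    by_contra h
    have hk1 : k ≤ e - 1 := by omega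
    have hdvd' : orderOf c ∣ 2 ^ (e - 1) := hkeq ▸ pow_dvd_pow 2 hk1
    have h1 : c ^ (2 ^ (e - 1)) = 1 := orderOf_dvd_iff_pow_eq_one.mp hdvd'
    rw [hc1] at h1
    exact ZMod.neg_one_ne_one h1
  have hcne : c ≠ 0 := by
    intro h
    rw [h, zero_pow (by positivity : 2 ^ (e - 1) ≠ 0)] at hc1
    simp at hc1
  have hfermat : c ^ (p - 1) = 1 := ZMod.pow_card_sub_one_eq_one hcne
  have hdvd : 2 ^ e ∣ p - 1 := by
    have := orderOf_dvd_of_pow_eq_one hfermat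
    rwa [hkeq, hke] at this
  have hple : 2 ^ e + 1 ≤ p := by
    have hpos : 0 < p - 1 := by omega
    have := Nat.le_of_dvd hpos hdvd
    omega
  have hsq : p ^ 2 ≤ N := Nat.minFac_sq_le_self (by omega) hcomp
  have hx : 1 ≤ 2 ^ e := Nat.one_le_two_pow
  nlinarith [hsq, hple, hlt, hx]
end
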